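/- arXiv:2302.07595 — 3 statements merged into one kernel-verified Lean document; each statement's English description precedes it below -/
import Mathlib

section
/- If L ⊆ M_{n,ℓ,t} is a t-spread strongly stable set, then its t-spread shadow equals {w·x_j : w ∈ L, j ≥ max(w), w·x_j is t-spread}, where max(w) denotes the largest index of a variable dividing w. -/
open Multiset Finset

/-- A monomial in `K[x_1,…,x_n]` is encoded by the multiset of its variable
indices (each index lies in `[1, n]`).  `TSpread n d t u` says that `u` is a
t-spread monomial: its degree is at most `d`, its indices lie in `[1,n]`, and
consecutive indices `j_k ≤ j_{k+1}` of its sorted index list satisfy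
`j_{k+1} - j_k ≥ t_k` (here `t 1 = t_1, …, t (d-1) = t_{d-1}`). -/
def TSpread (n d : ℕ) (t : ℕ → ℕ) (u : Multiset ℕ) : Prop :=
  u.card ≤ d ∧ (∀ i ∈ u, 1 ≤ i ∧ i ≤ n) ∧
    ∀ k : ℕ, k + 1 < u.card →
      (u.sort (· ≤ ·)).getD k 0 + t (k + 1) ≤ (u.sort (· ≤ ·)).getD (k + 1) 0

/-- `Mset n d ℓ t` : the set `M_{n,ℓ,t}` of t-spread monomials of degree `ℓ`. -/
def Mset (n d ℓ : ℕ) (t : ℕ → ℕ) : Set (Multiset ℕ) :=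
  {u | TSpread n d t u ∧ u.card = ℓ}

/-- the t-spread shadow `Shad_t(L) = {x_i w : w ∈ L, x_i w t-spread, i = 1..n}`. -/
def Shad (n d : ℕ) (t : ℕ → ℕ) (L : Set (Multiset ℕ)) : Set (Multiset ℕ) :=
  {v | ∃ w ∈ L, ∃ i, 1 ≤ i ∧ i ≤ n ∧ v = i ::ₘ w ∧ TSpread n d t v}

/-- largest variable index dividing `u` (0 for the constant monomial). -/
def maxVar (u : Multiset ℕ) : ℕ := (u.sort (· ≤ ·)).getLastD 0

/-- `lexGE u v` : `u ≥_lex v` for monomials of equal degree, where the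
lexicographic order is induced by `x_1 > x_2 > ⋯ > x_n`. -/
def lexGE (u v : Multiset ℕ) : Prop :=
  u = v ∨ List.Lex (· < ·) (u.sort (· ≤ ·)) (v.sort (· ≤ ·))

/-- `L` is a t-spread strongly stable set. -/
def StronglyStableSet (n d : ℕ) (t : ℕ → ℕ) (L : Set (Multiset ℕ)) : Prop :=
  ∀ u ∈ L, ∀ i ∈ u, ∀ j : ℕ, 1 ≤ j → j < i →
    TSpread n d t (j ::ₘ u.erase i) → (j ::ₘ u.erase i) ∈ L

/-- `L` is a t-spread lex set (inside `M_{n,ℓ,t}`). -/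
def LexSet (n d ℓ : ℕ) (t : ℕ → ℕ) (L : Set (Multiset ℕ)) : Prop :=
  ∀ u ∈ L, ∀ v ∈ Mset n d ℓ t, lexGE v u → v ∈ L

/-- `m_i(L)` : number of monomials of `L` with largest variable index `i`. -/
noncomputable def mEq (i : ℕ) (L : Set (Multiset ℕ)) : ℕ :=
  {u ∈ L | maxVar u = i}.ncard

/-- `m_{≤ i}(L)` : number of monomials of `L` with largest variable index `≤ i`. -/
noncomputable def mLe (i : ℕ) (L : Set (Multiset ℕ)) : ℕ :=
  {u ∈ L | maxVar u ≤ i}.ncard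

/-- `I` is (the set of monomials of) a monomial ideal of `K[x_1,…,x_n]`. -/
def MonIdeal (n : ℕ) (I : Set (Multiset ℕ)) : Prop :=
  (∀ u ∈ I, ∀ i ∈ u, 1 ≤ i ∧ i ≤ n) ∧
    ∀ u ∈ I, ∀ i : ℕ, 1 ≤ i → i ≤ n → (i ::ₘ u) ∈ I

/-- `I` is generated by t-spread monomials. -/
def TSpreadGen (n d : ℕ) (t : ℕ → ℕ) (I : Set (Multiset ℕ)) : Prop :=
  ∀ u ∈ I, ∃ v ∈ I, TSpread n d t v ∧ v ≤ u

/-- The t-spread operator `a ↦ a^{(n,ℓ,t)}`:  if `a = Σ_{j=p}^{ℓ} C(a_j, j)` is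
the Macaulay expansion of `a` with respect to `ℓ`, then
`tOp t_ℓ ℓ a = Σ_{j=p+1}^{ℓ+1} C(a_{j-1} + 1 - t_ℓ, j)`, computed greedily. -/
noncomputable def tOp (s : ℕ) : ℕ → ℕ → ℕ
  | 0, _ => 0
  | ℓ + 1, a =>
    if a = 0 then 0
    else
      (sSup {b | Nat.choose b (ℓ + 1) ≤ a} + 1 - s).choose (ℓ + 2) +
        tOp s ℓ (a - Nat.choose (sSup {b | Nat.choose b (ℓ + 1) ≤ a}) (ℓ + 1))

/-- The graded Betti number `β_{i,j}(I)` of a t-spread strongly stable ideal,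
via the Eliahou–Kervaire-type formula
`β_{i,i+q}(I) = Σ_{u ∈ G(I)_q} C(max(u) - 1 - Σ_{h=1}^{q-1} t_h, i)`. -/
noncomputable def betti (t : ℕ → ℕ) (I : Set (Multiset ℕ)) (i j : ℕ) : ℕ :=
  ∑ᶠ u ∈ {u ∈ I | u.card = j - i ∧ ∀ v ∈ I, v ≤ u → v = u},
    (maxVar u - 1 - ∑ h ∈ Finset.Icc 1 (j - i - 1), t h).choose i


lemma sorted_le_getLastD {l : List ℕ} (hs : l.Pairwise (· ≤ ·)) {x : ℕ} (hx : x ∈ l) :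
    x ≤ l.getLastD 0 := by
  induction l with
  | nil => simp at hx
  | cons a l ih =>
    match l with
    | [] => simp_all
    | b :: l' =>
      rw [List.getLastD_cons, List.getLastD_cons]
      rcases List.mem_cons.1 hx with rfl | hx
      · exact List.rel_of_pairwise_cons hs (List.getLastD_mem_cons (l := l') (a := b))
      · have := ih hs.of_cons hx
        rwa [List.getLastD_cons] at this

lemma maxVar_spec {u : Multiset ℕ} {x : ℕ} (hx : x ∈ u) : x ≤ maxVar u :=
  sorted_le_getLastD (u.pairwise_sort (· ≤ ·)) ((Multiset.mem_sort _).2 hx)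

lemma maxVar_mem {u : Multiset ℕ} (h : u ≠ 0) : maxVar u ∈ u := by
  have hl : u.sort (· ≤ ·) ≠ [] := fun he =>
    h (by rw [← Multiset.sort_eq u (· ≤ ·), he]; rfl)
  have : maxVar u ∈ u.sort (· ≤ ·) := by
    unfold maxVar
    rw [List.getLastD_eq_getLast?, List.getLast?_eq_getLast hl]
    exact List.getLast_mem hl
  exact (Multiset.mem_sort _).1 this

lemma list_decomp {l : List ℕ} (h : l ≠ []) : l = l.dropLast ++ [l.getLastD 0] := by
  conv_lhs => rw [← List.dropLast_append_getLast h]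
  rw [List.getLastD_eq_getLast?, List.getLast?_eq_getLast h]
  simp

lemma sort_erase_maxVar {u : Multiset ℕ} (h : u ≠ 0) :
    (u.erase (maxVar u)).sort (· ≤ ·) = (u.sort (· ≤ ·)).dropLast := by
  have hlne : u.sort (· ≤ ·) ≠ [] := fun he =>
    h (by rw [← Multiset.sort_eq u (· ≤ ·), he]; rfl)
  have hdecomp : u.sort (· ≤ ·) = (u.sort (· ≤ ·)).dropLast ++ [maxVar u] :=
    list_decomp hlne
  have hu2 : u = maxVar u ::ₘ ((u.sort (· ≤ ·)).dropLast : Multiset ℕ) := by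
    conv_lhs => rw [← Multiset.sort_eq u (· ≤ ·)]
    rw [Multiset.cons_coe, Multiset.coe_eq_coe]
    conv_lhs => rw [hdecomp]
    exact List.perm_append_singleton _ _
  have herase : u.erase (maxVar u) = ((u.sort (· ≤ ·)).dropLast : Multiset ℕ) :=
    (Multiset.cons_inj_right _).1 ((Multiset.cons_erase (maxVar_mem h)).trans hu2)
  rw [herase]
  exact List.Perm.eq_of_pairwise' (Multiset.pairwise_sort _ _)
    ((Multiset.pairwise_sort u (· ≤ ·)).sublist (List.dropLast_sublist _))
    (Multiset.coe_eq_coe.1 (Multiset.sort_eq _ _))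

lemma tspread_erase_maxVar {n d : ℕ} {t : ℕ → ℕ} {u : Multiset ℕ} (h : u ≠ 0)
    (ht : TSpread n d t u) : TSpread n d t (u.erase (maxVar u)) := by
  obtain ⟨hc, hmem, hsp⟩ := ht
  refine ⟨le_trans (Multiset.card_erase_le ..) hc, ?_, ?_⟩
  · intro i hi
    exact hmem i (Multiset.mem_of_mem_erase hi)
  · intro k hk
    rw [Multiset.card_erase_of_mem (maxVar_mem h), Nat.pred_eq_sub_one] at hk
    rw [sort_erase_maxVar h]
    have hlen : (u.sort (· ≤ ·)).length = u.card := Multiset.length_sort _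
    have hcard : 0 < u.card := Multiset.card_pos.2 h
    have h1 : k < (u.sort (· ≤ ·)).dropLast.length := by
      rw [List.length_dropLast, hlen]; omega
    have h2 : k + 1 < (u.sort (· ≤ ·)).dropLast.length := by
      rw [List.length_dropLast, hlen]; omega
    rw [List.getD_eq_getElem _ _ h1, List.getD_eq_getElem _ _ h2,
      List.getElem_dropLast, List.getElem_dropLast]
    have h3 : k < (u.sort (· ≤ ·)).length := by omega
    have h4 : k + 1 < (u.sort (· ≤ ·)).length := by omega
    have := hsp k (by omega)
    rwa [List.getD_eq_getElem _ _ h3, List.getD_eq_getElem _ _ h4] at this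

/-- for a t-spread strongly stable set `L ⊆ M_{n,ℓ,t}`,
`Shad_t(L) = {w x_j : w ∈ L, j ≥ max(w), w x_j t-spread}`. -/
theorem stmt1 (n d ℓ : ℕ) (t : ℕ → ℕ) (hd : 2 ≤ d) (hℓ : ℓ ≤ d)
    (L : Set (Multiset ℕ)) (hLM : L ⊆ Mset n d ℓ t)
    (hss : StronglyStableSet n d t L) :
    Shad n d t L =
      {v | ∃ w ∈ L, ∃ j, maxVar w ≤ j ∧ v = j ::ₘ w ∧ TSpread n d t v} := by
  ext v
  constructor
  · rintro ⟨w, hw, i, hi1, hin, rfl, htv⟩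
    by_cases hmax : maxVar w ≤ i
    · exact ⟨w, hw, i, hmax, rfl, htv⟩
    · push_neg at hmax
      have hwne : w ≠ 0 := by
        rintro rfl
        simp [maxVar, Multiset.sort_zero] at hmax
      set m := maxVar (i ::ₘ w) with hm
      have hvne : (i ::ₘ w : Multiset ℕ) ≠ 0 := Multiset.cons_ne_zero
      have hmw_mem : maxVar w ∈ (i ::ₘ w : Multiset ℕ) :=
        Multiset.mem_cons_of_mem (maxVar_mem hwne)
      have him : i < m := lt_of_lt_of_le hmax (maxVar_spec hmw_mem)
      have hmmem : m ∈ (i ::ₘ w : Multiset ℕ) := maxVar_mem hvne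
      have hmw : m ∈ w := by
        rcases Multiset.mem_cons.1 hmmem with h | h
        · omega
        · exact h
      have hkey : (i ::ₘ w).erase m = i ::ₘ w.erase m :=
        Multiset.erase_cons_tail _ (by omega)
      have htw' : TSpread n d t (i ::ₘ w.erase m) := by
        rw [← hkey]; exact tspread_erase_maxVar hvne htv
      have hw' : (i ::ₘ w.erase m) ∈ L := hss w hw m hmw i hi1 him htw'
      refine ⟨i ::ₘ w.erase m, hw', m, ?_, ?_, htv⟩
      · have hmem' : maxVar (i ::ₘ w.erase m) ∈ (i ::ₘ w.erase m : Multiset ℕ) :=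
          maxVar_mem Multiset.cons_ne_zero
        exact maxVar_spec (Multiset.mem_of_mem_erase (s := i ::ₘ w)
          (by rw [hkey]; exact hmem'))
      · rw [← hkey, Multiset.cons_erase hmmem]
  · rintro ⟨w, hw, j, hj, rfl, htv⟩
    have hjmem : j ∈ (j ::ₘ w : Multiset ℕ) := Multiset.mem_cons_self _ _
    obtain ⟨hj1, hjn⟩ := htv.2.1 j hjmem
    exact ⟨w, hw, j, hj1, hjn, rfl, htv⟩
end

section
/- Let L ⊆ M_{n,ℓ,t} be a t-spread strongly stable set with ℓ < d. Then for all i, the number of monomials u in Shad_t(L) with max(u) = i equals the number of monomials w ∈ L with max(w) ≤ i - t_ℓ; that is, m_i(Shad_t(L)) = m_{≤ i - t_ℓ}(L). -/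
open Multiset Finset

lemma sort_coe (l : List ℕ) (h : l.Pairwise (· ≤ ·)) :
    Multiset.sort (r := (· ≤ ·)) (l : Multiset ℕ) = l :=
  (Multiset.coe_eq_coe.mp (Multiset.sort_eq _ _)).eq_of_pairwise'
    (Multiset.pairwise_sort _ _) h

lemma getLastD_eq_getD (l : List ℕ) : l.getLastD 0 = l.getD (l.length - 1) 0 := by
  rw [List.getLastD_eq_getLast?, List.getLast?_eq_getElem?, List.getD_eq_getElem?_getD]

lemma sort_ne_nil (u : Multiset ℕ) (h : u ≠ 0) : Multiset.sort (r := (· ≤ ·)) u ≠ [] := by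
  intro hc
  apply h
  have := Multiset.sort_eq u (· ≤ ·)
  rw [hc] at this
  simpa using this.symm

lemma sort_cons_of_le (w : Multiset ℕ) (i : ℕ) (h : ∀ j ∈ w, j ≤ i) :
    Multiset.sort (r := (· ≤ ·)) (i ::ₘ w) = Multiset.sort (r := (· ≤ ·)) w ++ [i] := by
  have hs : (Multiset.sort (r := (· ≤ ·)) w ++ [i]).Pairwise (· ≤ ·) := by
    rw [List.pairwise_append]
    exact ⟨Multiset.pairwise_sort _ _, List.pairwise_singleton _ _,
      fun a ha b hb => by simp at hb; subst hb; exact h a ((Multiset.mem_sort _).mp ha)⟩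
  have hcoe : ((Multiset.sort (r := (· ≤ ·)) w ++ [i] : List ℕ) : Multiset ℕ) = i ::ₘ w := by
    rw [← Multiset.coe_add, Multiset.sort_eq, add_comm, Multiset.coe_singleton, Multiset.singleton_add]
  rw [← hcoe, sort_coe _ hs]

lemma mem_le_maxVar (u : Multiset ℕ) (h : u ≠ 0) :
    maxVar u ∈ u ∧ ∀ j ∈ u, j ≤ maxVar u := by
  set l := Multiset.sort (r := (· ≤ ·)) u with hl
  have hne : l ≠ [] := sort_ne_nil u h
  have hlast : maxVar u = l.getLast hne := by
    rw [maxVar, ← hl, List.getLastD_eq_getLast?, List.getLast?_eq_getLast hne]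
    rfl
  constructor
  · rw [hlast, ← Multiset.mem_sort (· ≤ ·)]
    exact List.getLast_mem hne
  · intro j hj
    have hjl : j ∈ l := (Multiset.mem_sort _).mpr hj
    have hsp : l.Pairwise (· ≤ ·) := Multiset.pairwise_sort _ _
    have hdec := List.dropLast_append_getLast hne
    rw [← hdec, List.pairwise_append] at hsp
    rw [← hdec] at hjl
    rcases List.mem_append.mp hjl with hj1 | hj2
    · rw [hlast]; exact hsp.2.2 j hj1 _ (List.mem_singleton_self _)
    · simp at hj2; rw [hlast, hj2]

lemma erase_max (u : Multiset ℕ) (h : u ≠ 0) :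
    u.erase (maxVar u) = (((Multiset.sort (r := (· ≤ ·)) u).dropLast : List ℕ) : Multiset ℕ) := by
  set l := Multiset.sort (r := (· ≤ ·)) u with hl
  have hne : l ≠ [] := sort_ne_nil u h
  have hlast : maxVar u = l.getLast hne := by
    rw [maxVar, ← hl, List.getLastD_eq_getLast?, List.getLast?_eq_getLast hne]; rfl
  have hu : u = maxVar u ::ₘ ((l.dropLast : List ℕ) : Multiset ℕ) := by
    conv_lhs => rw [← Multiset.sort_eq u (· ≤ ·), ← hl, ← List.dropLast_append_getLast hne]
    rw [← Multiset.coe_add, add_comm, Multiset.coe_singleton, Multiset.singleton_add, hlast]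
  calc u.erase (maxVar u) = (maxVar u ::ₘ ((l.dropLast : List ℕ) : Multiset ℕ)).erase (maxVar u) := by
        rw [← hu]
    _ = _ := Multiset.erase_cons_head _ _

lemma sort_erase_max (u : Multiset ℕ) (h : u ≠ 0) :
    Multiset.sort (r := (· ≤ ·)) (u.erase (maxVar u)) = (Multiset.sort (r := (· ≤ ·)) u).dropLast := by
  rw [erase_max u h]
  exact sort_coe _ ((Multiset.pairwise_sort u (· ≤ ·)).sublist (List.dropLast_sublist _))

lemma tspread_cons' (n d : ℕ) (t : ℕ → ℕ) (w : Multiset ℕ) (i ℓ : ℕ)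
    (hw : TSpread n d t w) (hcard : w.card = ℓ) (hℓ1 : 1 ≤ ℓ) (hℓd : ℓ < d)
    (hi1 : 1 ≤ i) (hin : i ≤ n) (hmax : maxVar w + t ℓ ≤ i) :
    TSpread n d t (i ::ₘ w) := by
  have hw0 : w ≠ 0 := by intro hc; rw [hc] at hcard; simp at hcard; omega
  have hle : ∀ j ∈ w, j ≤ i := fun j hj =>
    le_trans (le_trans ((mem_le_maxVar w hw0).2 j hj) (Nat.le_add_right _ _)) hmax
  have hsort : Multiset.sort (r := (· ≤ ·)) (i ::ₘ w) = Multiset.sort (r := (· ≤ ·)) w ++ [i] :=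
    sort_cons_of_le w i hle
  have hlen : (Multiset.sort (r := (· ≤ ·)) w).length = ℓ := by
    rw [Multiset.length_sort, hcard]
  refine ⟨?_, ?_, ?_⟩
  · rw [Multiset.card_cons, hcard]; omega
  · intro j hj
    rcases Multiset.mem_cons.mp hj with rfl | hj
    · exact ⟨hi1, hin⟩
    · exact hw.2.1 j hj
  · intro k hk
    rw [Multiset.card_cons, hcard] at hk
    rw [hsort]
    rcases Nat.lt_or_ge (k + 1) ℓ with hkl | hkl
    · rw [List.getD_append _ _ _ k (by omega), List.getD_append _ _ _ (k+1) (by omega)]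
      exact hw.2.2 k (by omega)
    · have hkeq : k + 1 = ℓ := by omega
      have h1 : (Multiset.sort (r := (· ≤ ·)) w ++ [i]).getD (k+1) 0 = i := by
        rw [List.getD_eq_getElem?_getD, show k + 1 = (Multiset.sort (r := (· ≤ ·)) w).length from by omega,
          List.getElem?_concat_length]
        rfl
      have h2 : (Multiset.sort (r := (· ≤ ·)) w ++ [i]).getD k 0 = maxVar w := by
        rw [List.getD_append _ _ _ k (by omega), maxVar, getLastD_eq_getD, hlen]
        congr 1
        omega
      rw [h1, h2, hkeq]
      exact hmax

lemma tspread_erase_max (n d : ℕ) (t : ℕ → ℕ) (u : Multiset ℕ)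
    (h : TSpread n d t u) (h2 : 2 ≤ u.card) :
    TSpread n d t (u.erase (maxVar u)) ∧
      maxVar (u.erase (maxVar u)) + t (u.card - 1) ≤ maxVar u := by
  have hne : u ≠ 0 := by intro hc; rw [hc] at h2; simp at h2
  have hsort : Multiset.sort (r := (· ≤ ·)) (u.erase (maxVar u)) = (Multiset.sort (r := (· ≤ ·)) u).dropLast :=
    sort_erase_max u hne
  have hcard : (u.erase (maxVar u)).card = u.card - 1 :=
    Multiset.card_erase_of_mem (mem_le_maxVar u hne).1
  have hlen : (Multiset.sort (r := (· ≤ ·)) u).length = u.card := Multiset.length_sort _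
  have hdlen : (Multiset.sort (r := (· ≤ ·)) u).dropLast.length = u.card - 1 := by
    rw [List.length_dropLast, hlen]
  have hgd : ∀ k, k < u.card - 1 →
      (Multiset.sort (r := (· ≤ ·)) u).dropLast.getD k 0 = (Multiset.sort (r := (· ≤ ·)) u).getD k 0 := by
    intro k hk
    rw [List.getD_eq_getElem?_getD, List.getD_eq_getElem?_getD, List.getElem?_dropLast,
      if_pos (by omega)]
  constructor
  · refine ⟨?_, fun j hj => h.2.1 j (Multiset.mem_of_mem_erase hj), ?_⟩
    · rw [hcard]; have := h.1; omega
    · intro k hk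
      rw [hcard] at hk
      rw [hsort, hgd k (by omega), hgd (k+1) (by omega)]
      exact h.2.2 k (by omega)
  · have hm1 : maxVar (u.erase (maxVar u)) = (Multiset.sort (r := (· ≤ ·)) u).getD (u.card - 2) 0 := by
      rw [maxVar, hsort, getLastD_eq_getD, hdlen,
        show u.card - 1 - 1 = u.card - 2 from by omega, hgd _ (by omega)]
    have hm2 : maxVar u = (Multiset.sort (r := (· ≤ ·)) u).getD (u.card - 1) 0 := by
      rw [maxVar, getLastD_eq_getD, hlen]
    rw [hm1, hm2]
    have he : u.card - 2 + 1 = u.card - 1 := by omega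
    have := h.2.2 (u.card - 2) (by omega)
    rw [he] at this
    exact this

lemma maxVar_cons_of_le (w : Multiset ℕ) (i : ℕ) (h : ∀ j ∈ w, j ≤ i) :
    maxVar (i ::ₘ w) = i := by
  rw [maxVar, sort_cons_of_le w i h, List.getLastD_eq_getLast?, List.getLast?_concat]
  rfl

/-- for a t-spread strongly stable set `L ⊆ M_{n,ℓ,t}` with `ℓ < d`,
`m_i(Shad_t(L)) = m_{≤ i - t_ℓ}(L)` for all `i`. -/
theorem stmt4 (n d ℓ : ℕ) (t : ℕ → ℕ) (hd : 2 ≤ d) (hℓ1 : 1 ≤ ℓ) (hℓ : ℓ < d)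
    (L : Set (Multiset ℕ)) (hLM : L ⊆ Mset n d ℓ t)
    (hss : StronglyStableSet n d t L) :
    ∀ i ≤ n, mEq i (Shad n d t L) = mLe (i - t ℓ) L := by
  intro i hin
  classical
  have hmapsg : Set.MapsTo (fun w => i ::ₘ w)
      {w ∈ L | maxVar w ≤ i - t ℓ} {u ∈ Shad n d t L | maxVar u = i} := by
    rintro w ⟨hwL, hwmax⟩
    obtain ⟨hTw, hwcard⟩ := hLM hwL
    have hw0 : w ≠ 0 := by
      intro hc; rw [hc] at hwcard; simp at hwcard; omega
    have h1m : 1 ≤ maxVar w := (hTw.2.1 _ (mem_le_maxVar w hw0).1).1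
    have hmaxi : maxVar w + t ℓ ≤ i := by omega
    have hi1 : 1 ≤ i := by omega
    have hT : TSpread n d t (i ::ₘ w) :=
      tspread_cons' n d t w i ℓ hTw hwcard hℓ1 hℓ hi1 hin hmaxi
    exact ⟨⟨w, hwL, i, hi1, hin, rfl, hT⟩,
      maxVar_cons_of_le w i (fun j hj => le_trans ((mem_le_maxVar w hw0).2 j hj) (by omega))⟩
  have hmapsf : Set.MapsTo (fun u => u.erase i)
      {u ∈ Shad n d t L | maxVar u = i} {w ∈ L | maxVar w ≤ i - t ℓ} := by
    rintro u ⟨⟨w, hwL, j, hj1, hjn, rfl, hTu⟩, hmaxu⟩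
    obtain ⟨hTw, hwcard⟩ := hLM hwL
    have hcard : (j ::ₘ w).card = ℓ + 1 := by rw [Multiset.card_cons, hwcard]
    have h2c : 2 ≤ (j ::ₘ w).card := by omega
    obtain ⟨hTe, hgap⟩ := tspread_erase_max n d t (j ::ₘ w) hTu h2c
    rw [hmaxu] at hTe
    rw [hmaxu, hcard] at hgap
    have hgap' : maxVar ((j ::ₘ w).erase i) + t ℓ ≤ i := by simpa using hgap
    have hmle : maxVar ((j ::ₘ w).erase i) ≤ i - t ℓ := by omega
    have hne : (j ::ₘ w) ≠ 0 := Multiset.cons_ne_zero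
    have hiu : i ∈ j ::ₘ w := hmaxu ▸ (mem_le_maxVar _ hne).1
    by_cases hji : j = i
    · subst hji
      rw [show (fun u => Multiset.erase u j) (j ::ₘ w) = w from Multiset.erase_cons_head j w]
      rw [Multiset.erase_cons_head] at hmle
      exact ⟨hwL, hmle⟩
    · have hiw : i ∈ w := by
        rcases Multiset.mem_cons.mp hiu with h | h
        · exact absurd h.symm hji
        · exact h
      have hjle : j ≤ i := hmaxu ▸ (mem_le_maxVar _ hne).2 j (Multiset.mem_cons_self j w)
      have hji' : j < i := lt_of_le_of_ne hjle hji
      have heq : (j ::ₘ w).erase i = j ::ₘ w.erase i := Multiset.erase_cons_tail w hji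
      rw [heq] at hTe hmle
      exact ⟨by
        show (fun u => Multiset.erase u i) (j ::ₘ w) ∈ L
        simp only [heq]
        exact hss w hwL i hiw j hj1 hji' hTe, by simpa [heq] using hmle⟩
  have hinv : Set.InvOn (fun w => i ::ₘ w) (fun u => u.erase i)
      {u ∈ Shad n d t L | maxVar u = i} {w ∈ L | maxVar w ≤ i - t ℓ} := by
    constructor
    · rintro u ⟨hu, hmaxu⟩
      have hne : u ≠ 0 := by
        rintro rfl
        obtain ⟨w, _, j, _, _, hcons, _⟩ := hu
        exact Multiset.cons_ne_zero hcons.symm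
      have hiu : i ∈ u := hmaxu ▸ (mem_le_maxVar u hne).1
      exact Multiset.cons_erase hiu
    · rintro w ⟨hwL, hmax⟩
      exact Multiset.erase_cons_head i w
  have hbij := hinv.bijOn hmapsf hmapsg
  show ({u ∈ Shad n d t L | maxVar u = i}).ncard = ({w ∈ L | maxVar w ≤ i - t ℓ}).ncard
  rw [← Nat.card_coe_set_eq, ← Nat.card_coe_set_eq]
  exact Nat.card_congr (hbij.equiv _)
end

section
/- Let L ⊂ M_{n,ℓ,t} be a t-spread lex set and N ⊂ M_{n,ℓ,t} a t-spread strongly stable set with |L| ≤ |N|. Then m_{≤ i}(L) ≤ m_{≤ i}(N) for all i = 1,...,n. -/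
open Multiset Finset

namespace Bayer

abbrev key (u : Multiset ℕ) : List ℕ := u.sort (· ≤ ·)

lemma key_coe (u : Multiset ℕ) : (key u : Multiset ℕ) = u := Multiset.sort_eq _ _

lemma key_length (u : Multiset ℕ) : (key u).length = Multiset.card u :=
  Multiset.length_sort _

lemma key_sorted (u : Multiset ℕ) : (key u).Pairwise (· ≤ ·) := Multiset.pairwise_sort ..

lemma key_inj {u v : Multiset ℕ} (h : key u = key v) : u = v := by
  rw [← key_coe u, ← key_coe v, h]

lemma mem_key {x : ℕ} {u : Multiset ℕ} : x ∈ key u ↔ x ∈ u := Multiset.mem_sort _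

lemma key_ne_nil {u : Multiset ℕ} (h : u ≠ 0) : key u ≠ [] := by
  intro hk
  have := key_length u
  rw [hk] at this
  simp only [List.length_nil] at this
  exact h (by rw [← Multiset.card_eq_zero, ← this])

lemma key_append {w : Multiset ℕ} {m : ℕ} (h : ∀ x ∈ w, x ≤ m) :
    key (m ::ₘ w) = key w ++ [m] := by
  refine (fun (hp : List.Perm _ _) h1 h2 =>
    List.Perm.eq_of_pairwise' (r := (· ≤ · : ℕ → ℕ → Prop)) h1 h2 hp) ?_ ?_ ?_
  · rw [← Multiset.coe_eq_coe, key_coe]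
    show (m ::ₘ w) = ((key w ++ [m] : List ℕ) : Multiset ℕ)
    rw [← Multiset.coe_add, key_coe]
    simp [← Multiset.singleton_add, add_comm]
  · exact key_sorted _
  · rw [List.pairwise_append]
    refine ⟨key_sorted w, List.pairwise_singleton _ _, ?_⟩
    intro x hx y hy
    rw [List.mem_singleton] at hy
    subst hy
    exact h x (mem_key.mp hx)

lemma getLastD_mem : ∀ (l : List ℕ) (d : ℕ), l ≠ [] → l.getLastD d ∈ l
  | [], _, h => absurd rfl h
  | a :: l, d, _ => by
    rw [List.getLastD_cons]
    rcases eq_or_ne l [] with rfl | hl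
    · simp
    · exact List.mem_cons_of_mem _ (getLastD_mem l a hl)

lemma sorted_le_getLastD : ∀ (l : List ℕ) (d : ℕ), l.Pairwise (· ≤ ·) →
    ∀ x ∈ l, x ≤ l.getLastD d
  | [], _, _, x, hx => absurd hx List.not_mem_nil
  | a :: l, d, hs, x, hx => by
    rw [List.getLastD_cons]
    rcases List.mem_cons.mp hx with rfl | hxl
    · rcases eq_or_ne l [] with rfl | hl
      · simp
      · exact le_trans ((List.pairwise_cons.mp hs).1 _ (getLastD_mem l x hl))
          (sorted_le_getLastD l x (List.pairwise_cons.mp hs).2 _ (getLastD_mem l x hl))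
    · exact sorted_le_getLastD l a (List.pairwise_cons.mp hs).2 x hxl

lemma getLastD_concat : ∀ (l : List ℕ) (m d : ℕ), (l ++ [m]).getLastD d = m
  | [], m, d => by simp
  | a :: l, m, d => by rw [List.cons_append, List.getLastD_cons, getLastD_concat l m a]

lemma getLastD_eq_getD : ∀ (l : List ℕ) (d : ℕ), l ≠ [] →
    l.getLastD d = l.getD (l.length - 1) d
  | [], _, h => absurd rfl h
  | a :: l, d, _ => by
    rcases eq_or_ne l [] with rfl | hl
    · simp
    · rw [List.getLastD_cons, getLastD_eq_getD l a hl]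
      have : (a :: l).length - 1 = (l.length - 1) + 1 := by
        have := List.length_pos_iff.mpr hl
        simp only [List.length_cons]
        omega
      rw [this]
      rcases List.exists_cons_of_ne_nil hl with ⟨b, l', rfl⟩
      simp [List.getD_cons_succ]

lemma le_maxVar {x : ℕ} {u : Multiset ℕ} (hx : x ∈ u) : x ≤ maxVar u :=
  sorted_le_getLastD _ 0 (key_sorted u) x (mem_key.mpr hx)

lemma maxVar_mem {u : Multiset ℕ} (h : u ≠ 0) : maxVar u ∈ u :=
  mem_key.mp (getLastD_mem _ 0 (key_ne_nil h))

lemma maxVar_le_iff {u : Multiset ℕ} {i : ℕ} : maxVar u ≤ i ↔ ∀ x ∈ u, x ≤ i := by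
  constructor
  · exact fun h x hx => le_trans (le_maxVar hx) h
  · intro h
    rcases eq_or_ne u 0 with rfl | hu
    · simp [maxVar, Multiset.sort_zero]
    · exact h _ (maxVar_mem hu)

lemma maxVar_cons {w : Multiset ℕ} {m : ℕ} (h : ∀ x ∈ w, x ≤ m) :
    maxVar (m ::ₘ w) = m := by
  show (key (m ::ₘ w)).getLastD 0 = m
  rw [key_append h, getLastD_concat]

lemma maxVar_singleton (a : ℕ) : maxVar ({a} : Multiset ℕ) = a := by
  have : ({a} : Multiset ℕ) = a ::ₘ 0 := rfl
  rw [this, maxVar_cons (by simp)]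

lemma list_lt_iff_lex (l l' : List ℕ) : l < l' ↔ List.Lex (· < ·) l l' := Iff.rfl

lemma lexGE_iff {u v : Multiset ℕ} : lexGE u v ↔ key u ≤ key v := by
  rw [le_iff_lt_or_eq, list_lt_iff_lex]
  unfold lexGE
  constructor
  · rintro (rfl | h)
    · exact Or.inr rfl
    · exact Or.inl h
  · rintro (h | h)
    · exact Or.inr h
    · exact Or.inl (key_inj h)

lemma lex_cons_inv {p q : ℕ} {u v : List ℕ} (h : List.Lex (· < ·) (p :: u) (q :: v)) :
    p < q ∨ (p = q ∧ List.Lex (· < ·) u v) := by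
  cases h with
  | cons h => exact Or.inr ⟨rfl, h⟩
  | rel h => exact Or.inl h

lemma lex_nil_nil : ¬ List.Lex (· < · : ℕ → ℕ → Prop) [] [] := by
  intro h; cases h

lemma lex_concat_lt : ∀ {a b : List ℕ}, a.length = b.length →
    List.Lex (· < ·) a b → ∀ (x y : ℕ), List.Lex (· < ·) (a ++ [x]) (b ++ [y]) := by
  intro a b hlen h
  induction h with
  | nil => simp at hlen
  | rel h => exact fun x y => List.Lex.rel h
  | cons h ih =>
    intro x y
    exact List.Lex.cons (ih (by simpa using hlen) x y)

lemma lex_concat_same : ∀ (a : List ℕ) {x y : ℕ}, x < y →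
    List.Lex (· < ·) (a ++ [x]) (a ++ [y])
  | [], x, y, h => List.Lex.rel h
  | p :: a, x, y, h => List.Lex.cons (lex_concat_same a h)

lemma lex_concat_same_inv : ∀ (a : List ℕ) {x y : ℕ},
    List.Lex (· < ·) (a ++ [x]) (a ++ [y]) → x < y
  | [], x, y, h => by
    rcases lex_cons_inv h with h' | ⟨rfl, h'⟩
    · exact h'
    · exact absurd h' lex_nil_nil
  | p :: a, x, y, h => by
    rcases lex_cons_inv h with h' | ⟨_, h'⟩
    · exact absurd h' (lt_irrefl _)
    · exact lex_concat_same_inv a h'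

lemma sandwich : ∀ (a K : List ℕ) (x y : ℕ), a ++ [x] ≤ K → K < a ++ [y] →
    K.length = a.length + 1 → ∃ j, x ≤ j ∧ j < y ∧ K = a ++ [j] := by
  intro a
  induction a with
  | nil =>
    intro K x y h1 h2 hlen
    obtain ⟨k, rfl⟩ := List.length_eq_one_iff.mp hlen
    refine ⟨k, ?_, ?_, rfl⟩
    · rcases eq_or_lt_of_le h1 with h | h
      · simp only [List.nil_append, List.cons.injEq] at h
        exact le_of_eq h.1
      · rcases lex_cons_inv ((list_lt_iff_lex _ _).mp h) with h' | ⟨rfl, h'⟩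
        · exact le_of_lt h'
        · exact absurd h' lex_nil_nil
    · rcases lex_cons_inv ((list_lt_iff_lex _ _).mp h2) with h' | ⟨rfl, h'⟩
      · exact h'
      · exact absurd h' lex_nil_nil
  | cons p a ih =>
    intro K x y h1 h2 hlen
    obtain ⟨q, K', rfl⟩ := List.exists_cons_of_ne_nil
      (List.ne_nil_of_length_pos (by rw [hlen]; omega))
    rcases eq_or_lt_of_le h1 with h | h
    · -- K = p :: (a ++ [x])
      refine ⟨x, le_refl x, ?_, h.symm⟩
      rw [← h] at h2
      rcases lex_cons_inv ((list_lt_iff_lex _ _).mp h2) with h' | ⟨_, h'⟩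
      · exact absurd h' (lt_irrefl _)
      · exact lex_concat_same_inv a h'
    · rcases lex_cons_inv ((list_lt_iff_lex _ _).mp h) with h' | ⟨rfl, h'⟩
      · rcases lex_cons_inv ((list_lt_iff_lex _ _).mp h2) with h'' | ⟨rfl, h''⟩
        · exact absurd (lt_trans h' h'') (lt_irrefl _)
        · exact absurd h' (lt_irrefl _)
      · rcases lex_cons_inv ((list_lt_iff_lex _ _).mp h2) with h'' | ⟨_, h''⟩
        · exact absurd h'' (lt_irrefl _)
        · obtain ⟨j, hxj, hjy, rfl⟩ := ih K' x y (le_of_lt ((list_lt_iff_lex _ _).mpr h'))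
            ((list_lt_iff_lex _ _).mpr h'') (by simpa using hlen)
          exact ⟨j, hxj, hjy, rfl⟩

lemma tspread_mono_n {n m d : ℕ} {t : ℕ → ℕ} {u : Multiset ℕ}
    (h : TSpread n d t u) (hb : ∀ x ∈ u, x ≤ m) : TSpread m d t u :=
  ⟨h.1, fun i hi => ⟨(h.2.1 i hi).1, hb i hi⟩, h.2.2⟩

lemma tspread_grow_n {n m d : ℕ} {t : ℕ → ℕ} {u : Multiset ℕ}
    (h : TSpread m d t u) (hmn : m ≤ n) : TSpread n d t u :=
  ⟨h.1, fun i hi => ⟨(h.2.1 i hi).1, le_trans (h.2.1 i hi).2 hmn⟩, h.2.2⟩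

lemma tspread_cons_iff {n d : ℕ} {t : ℕ → ℕ} {w : Multiset ℕ} {m : ℕ}
    (hw : ∀ x ∈ w, x ≤ m) (hw0 : w ≠ 0) :
    TSpread n d t (m ::ₘ w) ↔
      (Multiset.card w + 1 ≤ d ∧ (1 ≤ m ∧ m ≤ n) ∧ (∀ x ∈ w, 1 ≤ x ∧ x ≤ n) ∧
        (∀ k, k + 1 < Multiset.card w →
          (key w).getD k 0 + t (k + 1) ≤ (key w).getD (k + 1) 0) ∧
        maxVar w + t (Multiset.card w) ≤ m) := by
  have hkey : key (m ::ₘ w) = key w ++ [m] := key_append hw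
  have hlen : (key w).length = Multiset.card w := key_length w
  have hcard : Multiset.card (m ::ₘ w) = Multiset.card w + 1 := Multiset.card_cons _ _
  have hwpos : 1 ≤ Multiset.card w := by
    rcases Nat.eq_zero_or_pos (Multiset.card w) with h0 | h0
    · exact absurd (Multiset.card_eq_zero.mp h0) hw0
    · exact h0
  have hmaxg : maxVar w = (key w).getD (Multiset.card w - 1) 0 := by
    rw [maxVar, getLastD_eq_getD _ _ (key_ne_nil hw0), hlen]
  have hgetm : (key w ++ [m]).getD (Multiset.card w) 0 = m := by
    rw [List.getD_append_right _ _ _ _ (by omega), hlen]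
    simp
  constructor
  · rintro ⟨h1, h2, h3⟩
    refine ⟨by rwa [hcard] at h1, h2 m (Multiset.mem_cons_self _ _),
      fun x hx => h2 x (Multiset.mem_cons_of_mem hx), ?_, ?_⟩
    · intro k hk
      have := h3 k (by omega)
      rwa [show (m ::ₘ w).sort (· ≤ ·) = key w ++ [m] from hkey,
        List.getD_append _ _ _ _ (by omega), List.getD_append _ _ _ _ (by omega)] at this
    · have := h3 (Multiset.card w - 1) (by omega)
      rw [show (m ::ₘ w).sort (· ≤ ·) = key w ++ [m] from hkey,
        List.getD_append _ _ _ _ (by omega),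
        show Multiset.card w - 1 + 1 = Multiset.card w by omega, hgetm] at this
      rwa [hmaxg]
  · rintro ⟨h1, h2, h3, h4, h5⟩
    refine ⟨by omega, ?_, ?_⟩
    · intro x hx
      rcases Multiset.mem_cons.mp hx with rfl | hx
      · exact h2
      · exact h3 x hx
    · intro k hk
      rw [hcard] at hk
      rw [show (m ::ₘ w).sort (· ≤ ·) = key w ++ [m] from hkey]
      rcases Nat.lt_or_ge (k + 1) (Multiset.card w) with hlt | hge
      · rw [List.getD_append _ _ _ _ (by omega), List.getD_append _ _ _ _ (by omega)]
        exact h4 k hlt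
      · have hkeq : k + 1 = Multiset.card w := by omega
        rw [hkeq, hgetm, List.getD_append _ _ _ _ (by omega),
          show k = Multiset.card w - 1 by omega, ← hmaxg, ← hkeq]
        rw [hkeq]
        exact h5

lemma maxVar_pos {n d ℓ : ℕ} {t : ℕ → ℕ} {w : Multiset ℕ}
    (h : TSpread n d t w) (hc : Multiset.card w = ℓ) (hl : 1 ≤ ℓ) : 1 ≤ maxVar w := by
  have hw0 : w ≠ 0 := by
    intro h0; rw [h0] at hc; simp at hc; omega
  exact (h.2.1 _ (maxVar_mem hw0)).1

lemma decomp {n d ℓ : ℕ} {t : ℕ → ℕ} {u : Multiset ℕ}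
    (hts : TSpread n d t u) (hc : Multiset.card u = ℓ + 1) (hl : 1 ≤ ℓ) :
    u = maxVar u ::ₘ u.erase (maxVar u) ∧
    Multiset.card (u.erase (maxVar u)) = ℓ ∧
    u.erase (maxVar u) ≠ 0 ∧
    (∀ x ∈ u.erase (maxVar u), x ≤ maxVar u) ∧
    maxVar (u.erase (maxVar u)) + t ℓ ≤ maxVar u ∧
    TSpread (n - t ℓ) d t (u.erase (maxVar u)) ∧
    1 ≤ maxVar u ∧ maxVar u ≤ n := by
  have hu0 : u ≠ 0 := by intro h0; rw [h0] at hc; simp at hc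
  have hmem : maxVar u ∈ u := maxVar_mem hu0
  have heq : u = maxVar u ::ₘ u.erase (maxVar u) := (Multiset.cons_erase hmem).symm
  set w := u.erase (maxVar u) with hwdef
  have hcw : Multiset.card w = ℓ := by
    rw [hwdef, Multiset.card_erase_of_mem hmem, hc]; rfl
  have hw0 : w ≠ 0 := by intro h0; rw [h0] at hcw; simp at hcw; omega
  have hwle : ∀ x ∈ w, x ≤ maxVar u := fun x hx =>
    le_maxVar (Multiset.mem_of_mem_erase hx)
  have hts' : TSpread n d t (maxVar u ::ₘ w) := heq ▸ hts
  rw [tspread_cons_iff hwle hw0] at hts'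
  obtain ⟨hd1, hm1, hent, hgap, hlast⟩ := hts'
  rw [hcw] at hlast
  have hmaxw : maxVar w ≤ n - t ℓ := by
    have h1 : maxVar w + t ℓ ≤ n := le_trans hlast hm1.2
    omega
  refine ⟨heq, hcw, hw0, hwle, hlast, ?_, hm1.1, hm1.2⟩
  exact ⟨by omega, fun x hx => ⟨(hent x hx).1, le_trans (le_maxVar hx) hmaxw⟩,
    fun k hk => hgap k hk⟩

lemma build {n d ℓ : ℕ} {t : ℕ → ℕ} {w : Multiset ℕ}
    (hw : TSpread (n - t ℓ) d t w) (hc : Multiset.card w = ℓ) (hl : 1 ≤ ℓ)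
    (hdd : ℓ + 1 ≤ d) {j : ℕ} (hj1 : maxVar w + t ℓ ≤ j) (hjn : j ≤ n) :
    TSpread n d t (j ::ₘ w) ∧ maxVar (j ::ₘ w) = j ∧ (j ::ₘ w).erase j = w ∧
      Multiset.card (j ::ₘ w) = ℓ + 1 ∧ 1 ≤ j := by
  have hw0 : w ≠ 0 := by intro h0; rw [h0] at hc; simp at hc; omega
  have hmw : 1 ≤ maxVar w := maxVar_pos hw hc hl
  have hwle : ∀ x ∈ w, x ≤ j := fun x hx =>
    le_trans (le_maxVar hx) (le_trans (Nat.le_add_right _ _) hj1)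
  refine ⟨?_, maxVar_cons hwle, Multiset.erase_cons_head _ _, by simp [hc], by omega⟩
  rw [tspread_cons_iff hwle hw0]
  refine ⟨by omega, ⟨by omega, hjn⟩, fun x hx => ⟨(hw.2.1 x hx).1,
    le_trans (hw.2.1 x hx).2 (Nat.sub_le _ _)⟩, ?_, by rw [hc]; exact hj1⟩
  intro k hk
  exact hw.2.2 k (by omega)

def Ok (d : ℕ) (t : ℕ → ℕ) (n ℓ : ℕ) (u : Multiset ℕ) : Prop :=
  TSpread n d t u ∧ Multiset.card u = ℓ

def IsLex (d : ℕ) (t : ℕ → ℕ) (n ℓ : ℕ) (L : Finset (Multiset ℕ)) : Prop :=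
  ∀ u ∈ L, ∀ v, Ok d t n ℓ v → lexGE v u → v ∈ L

def IsSS (d : ℕ) (t : ℕ → ℕ) (n : ℕ) (N : Finset (Multiset ℕ)) : Prop :=
  ∀ u ∈ N, ∀ i ∈ u, ∀ j : ℕ, 1 ≤ j → j < i →
    TSpread n d t (j ::ₘ u.erase i) → (j ::ₘ u.erase i) ∈ N

lemma colcard_sum {d : ℕ} {t : ℕ → ℕ} {ℓ n : ℕ} (hl : 1 ≤ ℓ) (hn : 1 ≤ n)
    (W : Finset (Multiset ℕ)) (hW : ∀ w ∈ W, Ok d t (n - t ℓ) ℓ w) :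
    ∑ w ∈ W, ((Finset.Icc (maxVar w + t ℓ) (n-1)).image (fun j => j ::ₘ w)).card
      = ∑ i' ∈ Finset.Icc 1 (n - t ℓ - 1), (W.filter (fun w => maxVar w ≤ i')).card := by
  have hper : ∀ w ∈ W,
      ((Finset.Icc (maxVar w + t ℓ) (n-1)).image (fun j => j ::ₘ w)).card
      = ∑ i' ∈ Finset.Icc 1 (n - t ℓ - 1), (if maxVar w ≤ i' then 1 else 0) := by
    intro w hw
    have h1 : 1 ≤ maxVar w := maxVar_pos (hW w hw).1 (hW w hw).2 hl
    have h2 : maxVar w ≤ n - t ℓ := maxVar_le_iff.mpr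
      (fun x hx => ((hW w hw).1.2.1 x hx).2)
    rw [Finset.card_image_of_injOn
      (fun a _ b _ h => ((Multiset.cons_inj_left w).mp h)),
      ← Finset.card_filter]
    have hfil : (Finset.Icc 1 (n - t ℓ - 1)).filter (fun i' => maxVar w ≤ i')
        = Finset.Icc (maxVar w) (n - t ℓ - 1) := by
      ext i'
      simp only [Finset.mem_filter, Finset.mem_Icc]
      omega
    rw [hfil, Nat.card_Icc, Nat.card_Icc]
    omega
  rw [Finset.sum_congr rfl hper, Finset.sum_comm]
  exact Finset.sum_congr rfl (fun i' _ => (Finset.card_filter _ _).symm)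

lemma maxVar_le_n {d : ℕ} {t : ℕ → ℕ} {n : ℕ} {u : Multiset ℕ}
    (h : TSpread n d t u) : maxVar u ≤ n :=
  maxVar_le_iff.mpr (fun x hx => (h.2.1 x hx).2)

lemma buildn {d : ℕ} {t : ℕ → ℕ} {ℓ n : ℕ} (hl : 1 ≤ ℓ) (hld : ℓ + 1 ≤ d)
    {w : Multiset ℕ} (hOk : Ok d t (n - t ℓ) ℓ w) :
    Ok d t n (ℓ + 1) (n ::ₘ w) ∧ maxVar (n ::ₘ w) = n ∧ (n ::ₘ w).erase n = w := by
  have h1 : 1 ≤ maxVar w := maxVar_pos hOk.1 hOk.2 hl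
  have h2 : maxVar w ≤ n - t ℓ := maxVar_le_n hOk.1
  obtain ⟨a, b, c, dd, _⟩ := build hOk.1 hOk.2 hl hld (j := n) (by omega) (le_refl n)
  exact ⟨⟨a, dd⟩, b, c⟩

lemma crux_deg1 {d : ℕ} {t : ℕ → ℕ} {n : ℕ} (hld : 1 ≤ d) (hn : 1 ≤ n)
    (L N : Finset (Multiset ℕ))
    (hL : ∀ u ∈ L, Ok d t n 1 u) (hN : ∀ u ∈ N, Ok d t n 1 u)
    (hss : IsSS d t n N) (hcard : L.card ≤ N.card) :
    (L.filter (fun u => maxVar u ≤ n - 1)).card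
      ≤ (N.filter (fun u => maxVar u ≤ n - 1)).card := by
  by_cases hNa : ∀ u ∈ N, maxVar u ≤ n - 1
  · rw [Finset.filter_true_of_mem hNa]
    exact le_trans (Finset.card_le_card (Finset.filter_subset _ _)) hcard
  · push_neg at hNa
    obtain ⟨u₀, hu₀N, hu₀⟩ := hNa
    have hOk := hN u₀ hu₀N
    have hmax_le : maxVar u₀ ≤ n := maxVar_le_n hOk.1
    obtain ⟨a, rfl⟩ := Multiset.card_eq_one.mp hOk.2
    have ha : a = n := by rw [maxVar_singleton] at hu₀ hmax_le; omega
    rw [ha] at hu₀N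
    have hsing : ∀ j, 1 ≤ j → j ≤ n - 1 →
        ({j} : Multiset ℕ) ∈ N.filter (fun u => maxVar u ≤ n - 1) := by
      intro j h1 h2
      have hts : TSpread n d t (j ::ₘ ({n} : Multiset ℕ).erase n) := by
        rw [show ({n} : Multiset ℕ).erase n = 0 from Multiset.erase_singleton n]
        refine ⟨by simpa using hld, ?_, ?_⟩
        · intro x hx
          rw [show (j ::ₘ (0 : Multiset ℕ)) = {j} from rfl, Multiset.mem_singleton] at hx
          exact ⟨hx ▸ h1, by omega⟩
        · intro k hk
          simp at hk
      have hmem := hss {n} hu₀N n (Multiset.mem_singleton_self n) j h1 (by omega) hts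
      rw [show ({n} : Multiset ℕ).erase n = 0 from Multiset.erase_singleton n] at hmem
      refine Finset.mem_filter.mpr ⟨hmem, ?_⟩
      rw [maxVar_singleton]
      omega
    have himg : (Finset.Icc 1 (n-1)).image (fun j => ({j} : Multiset ℕ))
        ⊆ N.filter (fun u => maxVar u ≤ n - 1) := by
      intro v hv
      obtain ⟨j, hj, rfl⟩ := Finset.mem_image.mp hv
      obtain ⟨hj1, hj2⟩ := Finset.mem_Icc.mp hj
      exact hsing j hj1 hj2
    have hNge : n - 1 ≤ (N.filter (fun u => maxVar u ≤ n - 1)).card := by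
      calc n - 1 = (Finset.Icc 1 (n-1)).card := by rw [Nat.card_Icc]; omega
        _ = ((Finset.Icc 1 (n-1)).image (fun j => ({j} : Multiset ℕ))).card :=
            (Finset.card_image_of_injOn (fun a _ b _ h => by
              simpa using h)).symm
        _ ≤ _ := Finset.card_le_card himg
    have hLle : (L.filter (fun u => maxVar u ≤ n - 1)).card ≤ n - 1 := by
      have := Finset.card_le_card_of_injOn (f := maxVar)
        (s := L.filter (fun u => maxVar u ≤ n - 1)) (t := Finset.Icc 1 (n-1)) ?_ ?_
      · rwa [Nat.card_Icc] at this
      · intro v hv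
        obtain ⟨hvL, hvP⟩ := Finset.mem_filter.mp hv
        obtain ⟨b, rfl⟩ := Multiset.card_eq_one.mp (hL v hvL).2
        rw [maxVar_singleton] at hvP ⊢
        exact Finset.mem_Icc.mpr ⟨((hL _ hvL).1.2.1 b (Multiset.mem_singleton_self b)).1, hvP⟩
      · intro v hv v' hv' heq
        obtain ⟨b, rfl⟩ := Multiset.card_eq_one.mp (hL v (Finset.mem_filter.mp hv).1).2
        obtain ⟨b', rfl⟩ := Multiset.card_eq_one.mp (hL v' (Finset.mem_filter.mp hv').1).2
        rw [maxVar_singleton, maxVar_singleton] at heq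
        rw [heq]
    omega

lemma crux_main {d : ℕ} {t : ℕ → ℕ} {ℓ n : ℕ} (hl : 1 ≤ ℓ) (hld : ℓ + 1 ≤ d) (hn : 1 ≤ n)
    (IH : ∀ (L N : Finset (Multiset ℕ)), (∀ u ∈ L, Ok d t (n - t ℓ) ℓ u) →
      (∀ u ∈ N, Ok d t (n - t ℓ) ℓ u) → IsLex d t (n - t ℓ) ℓ L → IsSS d t (n - t ℓ) N →
      L.card ≤ N.card → ∀ i, (L.filter (fun u => maxVar u ≤ i)).card
        ≤ (N.filter (fun u => maxVar u ≤ i)).card)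
    (L N : Finset (Multiset ℕ))
    (hL : ∀ u ∈ L, Ok d t n (ℓ+1) u) (hN : ∀ u ∈ N, Ok d t n (ℓ+1) u)
    (hlex : IsLex d t n (ℓ+1) L) (hss : IsSS d t n N)
    (hcard : L.card ≤ N.card) :
    (L.filter (fun u => maxVar u ≤ n-1)).card ≤ (N.filter (fun u => maxVar u ≤ n-1)).card := by
  classical
  by_cases hL'0 : L.filter (fun u => maxVar u ≤ n-1) = ∅
  · rw [hL'0]; simp
  obtain ⟨v₀, hv₀⟩ := Finset.nonempty_iff_ne_empty.mpr hL'0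
  have hLne : L.Nonempty := ⟨v₀, (Finset.mem_filter.mp hv₀).1⟩
  obtain ⟨u₀, hu₀L, hu₀max⟩ := Finset.exists_max_image L key hLne
  have hu₀Ok := hL u₀ hu₀L
  obtain ⟨he₀, hc₀, hne₀, hle₀, hgap₀, hts₀, hm₀1, hm₀n⟩ := decomp hu₀Ok.1 hu₀Ok.2 hl
  -- top parts and their heads
  have hmaxN : ∀ u ∈ N.filter (fun u => ¬ maxVar u ≤ n-1), u ∈ N ∧ maxVar u = n := by
    intro u hu
    have h' := Finset.mem_filter.mp hu
    have h'' : maxVar u ≤ n := maxVar_le_n (hN u h'.1).1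
    exact ⟨h'.1, by omega⟩
  have hmaxL : ∀ u ∈ L.filter (fun u => ¬ maxVar u ≤ n-1), u ∈ L ∧ maxVar u = n := by
    intro u hu
    have h' := Finset.mem_filter.mp hu
    have h'' : maxVar u ≤ n := maxVar_le_n (hL u h'.1).1
    exact ⟨h'.1, by omega⟩
  set Wn := (N.filter (fun u => ¬ maxVar u ≤ n-1)).image (fun u => u.erase (maxVar u))
    with hWndef
  set Ln := (L.filter (fun u => ¬ maxVar u ≤ n-1)).image (fun u => u.erase (maxVar u))
    with hLndef
  set col := fun w : Multiset ℕ => (Finset.Icc (maxVar w + t ℓ) (n-1)).image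
    (fun j => j ::ₘ w) with hcoldef
  set Lstar := insert (u₀.erase (maxVar u₀)) Ln with hLstardef
  -- column structure
  have hcol_elem : ∀ w : Multiset ℕ, ∀ v ∈ col w, ∃ j, maxVar w + t ℓ ≤ j ∧ j ≤ n-1 ∧
      v = j ::ₘ w ∧ maxVar v = j ∧ v.erase (maxVar v) = w := by
    intro w v hv
    obtain ⟨j, hj, rfl⟩ := Finset.mem_image.mp hv
    obtain ⟨hj1, hj2⟩ := Finset.mem_Icc.mp hj
    have hwle : ∀ x ∈ w, x ≤ j := fun x hx => le_trans (le_maxVar hx) (by omega)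
    have hmv : maxVar (j ::ₘ w) = j := maxVar_cons hwle
    exact ⟨j, hj1, hj2, rfl, hmv, by rw [hmv, Multiset.erase_cons_head]⟩
  -- facts about Wn
  have hWnOk : ∀ w ∈ Wn, Ok d t (n - t ℓ) ℓ w ∧ (n ::ₘ w) ∈ N := by
    intro w hw
    obtain ⟨u, hu, hueq⟩ := Finset.mem_image.mp hw
    obtain ⟨huN, humax⟩ := hmaxN u hu
    obtain ⟨he, hc, hne, hle, hgap, hts, _, _⟩ := decomp (hN u huN).1 (hN u huN).2 hl
    rw [hueq] at he hc hts
    rw [humax] at he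
    exact ⟨⟨hts, hc⟩, he ▸ huN⟩
  have hLnOk : ∀ w ∈ Ln, Ok d t (n - t ℓ) ℓ w ∧ (n ::ₘ w) ∈ L := by
    intro w hw
    obtain ⟨u, hu, hueq⟩ := Finset.mem_image.mp hw
    obtain ⟨huL, humax⟩ := hmaxL u hu
    obtain ⟨he, hc, hne, hle, hgap, hts, _, _⟩ := decomp (hL u huL).1 (hL u huL).2 hl
    rw [hueq] at he hc hts
    rw [humax] at he
    exact ⟨⟨hts, hc⟩, he ▸ huL⟩
  have hLstarOk : ∀ w ∈ Lstar, Ok d t (n - t ℓ) ℓ w := by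
    intro w hw
    rcases Finset.mem_insert.mp hw with rfl | hw'
    · exact ⟨hts₀, hc₀⟩
    · exact (hLnOk w hw').1
  -- membership criteria
  have hLnmem : ∀ w', Ok d t (n - t ℓ) ℓ w' → (n ::ₘ w') ∈ L → w' ∈ Ln := by
    intro w' hOk hmem
    obtain ⟨_, hmv, her⟩ := buildn hl hld hOk
    refine Finset.mem_image.mpr ⟨n ::ₘ w', Finset.mem_filter.mpr ⟨hmem, ?_⟩, ?_⟩
    · rw [hmv]; omega
    · rw [hmv, her]
  have hWnmem : ∀ w', Ok d t (n - t ℓ) ℓ w' → (n ::ₘ w') ∈ N → w' ∈ Wn := by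
    intro w' hOk hmem
    obtain ⟨_, hmv, her⟩ := buildn hl hld hOk
    refine Finset.mem_image.mpr ⟨n ::ₘ w', Finset.mem_filter.mpr ⟨hmem, ?_⟩, ?_⟩
    · rw [hmv]; omega
    · rw [hmv, her]
  -- N side counting
  have hsubN : Wn.biUnion col ⊆ N.filter (fun u => maxVar u ≤ n-1) := by
    intro v hv
    obtain ⟨w, hw, hvcol⟩ := Finset.mem_biUnion.mp hv
    obtain ⟨hwOk, hwN⟩ := hWnOk w hw
    obtain ⟨j, hj1, hj2, hveq, hmv, _⟩ := hcol_elem w v hvcol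
    subst hveq
    obtain ⟨hts', hmv', her', hc', hj0⟩ := build hwOk.1 hwOk.2 hl hld hj1 (by omega)
    have hz := hss (n ::ₘ w) hwN n (Multiset.mem_cons_self _ _) j hj0 (by omega)
      (by rw [Multiset.erase_cons_head]; exact hts')
    rw [Multiset.erase_cons_head] at hz
    exact Finset.mem_filter.mpr ⟨hz, by rw [hmv]; omega⟩
  have hdisj : ∀ w ∈ Wn, ∀ w' ∈ Wn, w ≠ w' → Disjoint (col w) (col w') := by
    intro w _ w' _ hne
    rw [Finset.disjoint_left]
    intro v hv hv'
    obtain ⟨j, _, _, _, _, herase⟩ := hcol_elem w v hv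
    obtain ⟨j', _, _, _, _, herase'⟩ := hcol_elem w' v hv'
    exact hne (by rw [← herase, ← herase'])
  have hNcount : ∑ w ∈ Wn, (col w).card ≤ (N.filter (fun u => maxVar u ≤ n-1)).card := by
    rw [← Finset.card_biUnion hdisj]
    exact Finset.card_le_card hsubN
  -- L side counting
  have hsubL : L.filter (fun u => maxVar u ≤ n-1) ⊆ Lstar.biUnion col := by
    intro v hv
    obtain ⟨hvL, hvP⟩ := Finset.mem_filter.mp hv
    obtain ⟨he, hc, hne, hle, hgap, hts, hm1, hmn⟩ := decomp (hL v hvL).1 (hL v hvL).2 hl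
    have hvcol : v ∈ col (v.erase (maxVar v)) :=
      Finset.mem_image.mpr ⟨maxVar v, Finset.mem_Icc.mpr ⟨hgap, hvP⟩, he.symm⟩
    by_cases hnw : (n ::ₘ v.erase (maxVar v)) ∈ L
    · exact Finset.mem_biUnion.mpr ⟨_, Finset.mem_insert_of_mem
        (hLnmem _ ⟨hts, hc⟩ hnw), hvcol⟩
    · obtain ⟨hOkn, hmvn, hern⟩ := buildn hl hld (⟨hts, hc⟩ : Ok d t (n - t ℓ) ℓ _)
      have hnotge : ¬ lexGE (n ::ₘ v.erase (maxVar v)) u₀ := fun hge =>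
        hnw (hlex u₀ hu₀L _ hOkn hge)
      rw [lexGE_iff] at hnotge
      have hlt : key u₀ < key (n ::ₘ v.erase (maxVar v)) := not_le.mp hnotge
      have hkn : key (n ::ₘ v.erase (maxVar v)) = key (v.erase (maxVar v)) ++ [n] :=
        key_append (fun x hx => le_trans (hle x hx) hmn)
      have hkv : key v = key (v.erase (maxVar v)) ++ [maxVar v] :=
        (congrArg key he).trans (key_append hle)
      have h1 : key (v.erase (maxVar v)) ++ [maxVar v] ≤ key u₀ := hkv ▸ hu₀max v hvL
      have h2 : key u₀ < key (v.erase (maxVar v)) ++ [n] := hkn ▸ hlt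
      have hlenK : (key u₀).length = (key (v.erase (maxVar v))).length + 1 := by
        rw [key_length, key_length, hu₀Ok.2, hc]
      obtain ⟨j, hmj, hjn, hKeq⟩ := sandwich _ _ _ _ h1 h2 hlenK
      have hu₀eq : u₀ = j ::ₘ v.erase (maxVar v) :=
        key_inj (hKeq.trans (key_append (fun x hx => le_trans (hle x hx) hmj)).symm)
      have hw₀ : u₀.erase (maxVar u₀) = v.erase (maxVar v) := by
        rw [hu₀eq, maxVar_cons (fun x hx => le_trans (hle x hx) hmj),
          Multiset.erase_cons_head]
      exact Finset.mem_biUnion.mpr ⟨_, hw₀ ▸ Finset.mem_insert_self _ _, hvcol⟩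
  -- Lstar is lex
  have hLstarLex : IsLex d t (n - t ℓ) ℓ Lstar := by
    intro w hw w' hw'Ok hge
    rw [lexGE_iff] at hge
    rcases eq_or_lt_of_le hge with heq | hlt
    · rw [key_inj heq]; exact hw
    · have hkey' : key (n ::ₘ w') = key w' ++ [n] := key_append
        (fun x hx => le_trans ((hw'Ok.1.2.1 x hx).2) (Nat.sub_le _ _))
      obtain ⟨hOkn', hmvn', hern'⟩ := buildn hl hld hw'Ok
      rcases Finset.mem_insert.mp hw with rfl | hwLn
      · have hku₀ : key u₀ = key (u₀.erase (maxVar u₀)) ++ [maxVar u₀] :=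
          (congrArg key he₀).trans (key_append hle₀)
        have hlen : (key w').length = (key (u₀.erase (maxVar u₀))).length := by
          rw [key_length, key_length, hw'Ok.2, hc₀]
        have : lexGE (n ::ₘ w') u₀ := lexGE_iff.mpr (le_of_lt (by
          rw [hkey', hku₀]
          exact (list_lt_iff_lex _ _).mpr
            (lex_concat_lt hlen ((list_lt_iff_lex _ _).mp hlt) n (maxVar u₀))))
        exact Finset.mem_insert_of_mem (hLnmem w' hw'Ok (hlex u₀ hu₀L _ hOkn' this))
      · obtain ⟨hOkw, hwL⟩ := hLnOk w hwLn
        have hkw : key (n ::ₘ w) = key w ++ [n] := key_append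
          (fun x hx => le_trans ((hOkw.1.2.1 x hx).2) (Nat.sub_le _ _))
        have hlen : (key w').length = (key w).length := by
          rw [key_length, key_length, hw'Ok.2, hOkw.2]
        have : lexGE (n ::ₘ w') (n ::ₘ w) := lexGE_iff.mpr (le_of_lt (by
          rw [hkey', hkw]
          exact (list_lt_iff_lex _ _).mpr
            (lex_concat_lt hlen ((list_lt_iff_lex _ _).mp hlt) n n)))
        exact Finset.mem_insert_of_mem (hLnmem w' hw'Ok (hlex (n ::ₘ w) hwL _ hOkn' this))
  -- Wn is strongly stable
  have hWnSS : IsSS d t (n - t ℓ) Wn := by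
    intro w hw i' hi' j hj1 hji hts'
    obtain ⟨hwOk, hwN⟩ := hWnOk w hw
    have hcard'' : Multiset.card (j ::ₘ w.erase i') = ℓ := by
      rw [Multiset.card_cons, Multiset.card_erase_of_mem hi', hwOk.2, Nat.pred_eq_sub_one]
      have : 1 ≤ ℓ := hl
      omega
    have hOk'' : Ok d t (n - t ℓ) ℓ (j ::ₘ w.erase i') := ⟨hts', hcard''⟩
    obtain ⟨hOkn, hmvn, hern⟩ := buildn hl hld hOk''
    have herase : (n ::ₘ w).erase i' = n ::ₘ w.erase i' := by
      by_cases h : i' = n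
      · subst h
        rw [Multiset.erase_cons_head, Multiset.cons_erase hi']
      · exact Multiset.erase_cons_tail w (fun hh => h hh.symm)
    have hznew := hss (n ::ₘ w) hwN i' (Multiset.mem_cons_of_mem hi') j hj1 hji
      (by rw [herase, Multiset.cons_swap]; exact hOkn.1)
    rw [herase, Multiset.cons_swap] at hznew
    exact hWnmem _ hOk'' hznew
  -- cardinalities
  have hNsplit := Finset.card_filter_add_card_filter_not
    (s := N) (p := fun u => maxVar u ≤ n-1)
  have hLsplit := Finset.card_filter_add_card_filter_not
    (s := L) (p := fun u => maxVar u ≤ n-1)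
  have hWncard : Wn.card = (N.filter (fun u => ¬ maxVar u ≤ n-1)).card := by
    apply Finset.card_image_of_injOn
    intro u hu u' hu' heq
    obtain ⟨huN, humax⟩ := hmaxN u hu
    obtain ⟨huN', humax'⟩ := hmaxN u' hu'
    have he := (decomp (hN u huN).1 (hN u huN).2 hl).1
    have he' := (decomp (hN u' huN').1 (hN u' huN').2 hl).1
    dsimp only at heq
    rw [humax, humax'] at heq
    rw [humax] at he
    rw [humax'] at he'
    rw [he, he', heq]
  have hLncard : Ln.card = (L.filter (fun u => ¬ maxVar u ≤ n-1)).card := by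
    apply Finset.card_image_of_injOn
    intro u hu u' hu' heq
    obtain ⟨huL, humax⟩ := hmaxL u hu
    obtain ⟨huL', humax'⟩ := hmaxL u' hu'
    have he := (decomp (hL u huL).1 (hL u huL).2 hl).1
    have he' := (decomp (hL u' huL').1 (hL u' huL').2 hl).1
    dsimp only at heq
    rw [humax, humax'] at heq
    rw [humax] at he
    rw [humax'] at he'
    rw [he, he', heq]
  by_contra hcon
  push_neg at hcon
  have hWnLstar : Lstar.card ≤ Wn.card := by
    have h1 : Lstar.card ≤ Ln.card + 1 := by
      rw [hLstardef]
      exact Finset.card_insert_le _ _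
    omega
  have hIH := IH Lstar Wn hLstarOk (fun w hw => (hWnOk w hw).1) hLstarLex hWnSS hWnLstar
  have hsum : ∑ w ∈ Lstar, (col w).card ≤ ∑ w ∈ Wn, (col w).card := by
    rw [hcoldef]
    rw [colcard_sum hl hn Lstar hLstarOk, colcard_sum hl hn Wn (fun w hw => (hWnOk w hw).1)]
    exact Finset.sum_le_sum (fun i' _ => hIH i')
  have hfinal : (L.filter (fun u => maxVar u ≤ n-1)).card
      ≤ (N.filter (fun u => maxVar u ≤ n-1)).card :=
    le_trans (Finset.card_le_card hsubL)
      (le_trans Finset.card_biUnion_le (le_trans hsum hNcount))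
  omega

theorem core (d : ℕ) (t : ℕ → ℕ) : ∀ ℓ n (L N : Finset (Multiset ℕ)), ℓ ≤ d →
    (∀ u ∈ L, Ok d t n ℓ u) → (∀ u ∈ N, Ok d t n ℓ u) →
    IsLex d t n ℓ L → IsSS d t n N → L.card ≤ N.card →
    ∀ i, (L.filter (fun u => maxVar u ≤ i)).card
      ≤ (N.filter (fun u => maxVar u ≤ i)).card := by
  intro ℓ
  induction ℓ with
  | zero =>
    intro n L N _ hL hN _ _ hcard i
    apply Finset.card_le_card (Finset.filter_subset_filter _ ?_)
    intro u hu
    have hu0 : u = 0 := Multiset.card_eq_zero.mp (hL u hu).2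
    have hNne : N.Nonempty := Finset.card_pos.mp
      (lt_of_lt_of_le (Finset.card_pos.mpr ⟨u, hu⟩) hcard)
    obtain ⟨v, hv⟩ := hNne
    have hv0 : v = 0 := Multiset.card_eq_zero.mp (hN v hv).2
    rw [hu0, ← hv0]
    exact hv
  | succ ℓ ih =>
    intro n
    induction n using Nat.strong_induction_on with
    | _ n ihn =>
      intro L N hld hL hN hlex hss hcard i
      by_cases hin : n ≤ i
      · have h1 : L.filter (fun u => maxVar u ≤ i) = L := Finset.filter_true_of_mem
          (fun u hu => le_trans (maxVar_le_n (hL u hu).1) hin)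
        have h2 : N.filter (fun u => maxVar u ≤ i) = N := Finset.filter_true_of_mem
          (fun u hu => le_trans (maxVar_le_n (hN u hu).1) hin)
        rw [h1, h2]; exact hcard
      · have hn : 1 ≤ n := by omega
        have hi : i ≤ n - 1 := by omega
        have hcrux : (L.filter (fun u => maxVar u ≤ n-1)).card
            ≤ (N.filter (fun u => maxVar u ≤ n-1)).card := by
          rcases Nat.eq_zero_or_pos ℓ with rfl | hl
          · exact crux_deg1 hld hn L N hL hN hss hcard
          · exact crux_main hl hld hn
              (fun L' N' a b c dd e => ih (n - t ℓ) L' N' (by omega) a b c dd e)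
              L N hL hN hlex hss hcard
        have hL'Ok : ∀ u ∈ L.filter (fun u => maxVar u ≤ n-1), Ok d t (n-1) (ℓ+1) u := by
          intro u hu
          obtain ⟨huL, hum⟩ := Finset.mem_filter.mp hu
          exact ⟨tspread_mono_n (hL u huL).1 (fun x hx => le_trans (le_maxVar hx) hum),
            (hL u huL).2⟩
        have hN'Ok : ∀ u ∈ N.filter (fun u => maxVar u ≤ n-1), Ok d t (n-1) (ℓ+1) u := by
          intro u hu
          obtain ⟨huN, hum⟩ := Finset.mem_filter.mp hu
          exact ⟨tspread_mono_n (hN u huN).1 (fun x hx => le_trans (le_maxVar hx) hum),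
            (hN u huN).2⟩
        have hlex' : IsLex d t (n-1) (ℓ+1) (L.filter (fun u => maxVar u ≤ n-1)) := by
          intro u hu v hvOk hge
          have hvL : v ∈ L := hlex u (Finset.mem_filter.mp hu).1 v
            ⟨tspread_grow_n hvOk.1 (Nat.sub_le _ _), hvOk.2⟩ hge
          exact Finset.mem_filter.mpr ⟨hvL, maxVar_le_n hvOk.1⟩
        have hss' : IsSS d t (n-1) (N.filter (fun u => maxVar u ≤ n-1)) := by
          intro u hu i' hi' j hj1 hji hts
          have hmem := hss u (Finset.mem_filter.mp hu).1 i' hi' j hj1 hji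
            (tspread_grow_n hts (Nat.sub_le _ _))
          exact Finset.mem_filter.mpr ⟨hmem, maxVar_le_n hts⟩
        have hres := ihn (n-1) (by omega) (L.filter (fun u => maxVar u ≤ n-1))
          (N.filter (fun u => maxVar u ≤ n-1)) hld hL'Ok hN'Ok hlex' hss' hcrux i
        have hfl : L.filter (fun u => maxVar u ≤ i)
            = (L.filter (fun u => maxVar u ≤ n-1)).filter (fun u => maxVar u ≤ i) := by
          rw [Finset.filter_filter]
          exact Finset.filter_congr (fun u _ => by
            constructor
            · intro h; exact ⟨by omega, h⟩
            · intro h; exact h.2)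
        have hfn : N.filter (fun u => maxVar u ≤ i)
            = (N.filter (fun u => maxVar u ≤ n-1)).filter (fun u => maxVar u ≤ i) := by
          rw [Finset.filter_filter]
          exact Finset.filter_congr (fun u _ => by
            constructor
            · intro h; exact ⟨by omega, h⟩
            · intro h; exact h.2)
        rw [hfl, hfn]
        exact hres

lemma mset_finite (n d ℓ : ℕ) (t : ℕ → ℕ) : (Mset n d ℓ t).Finite := by
  apply Set.Finite.subset ((ℓ • Multiset.range (n+1)).powerset.toFinset.finite_toSet)
  intro u hu
  obtain ⟨hts, hcard⟩ := hu
  rw [Finset.mem_coe, Multiset.mem_toFinset, Multiset.mem_powerset]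
  rw [Multiset.le_iff_count]
  intro a
  by_cases ha : a ∈ u
  · have h1 : a < n + 1 := by
      have := (hts.2.1 a ha).2
      omega
    rw [Multiset.count_nsmul,
      Multiset.count_eq_one_of_mem (Multiset.nodup_range (n+1)) (Multiset.mem_range.mpr h1),
      mul_one]
    calc Multiset.count a u ≤ Multiset.card u := Multiset.count_le_card a u
      _ = ℓ := hcard
  · rw [Multiset.count_eq_zero.mpr ha]
    exact Nat.zero_le _

end Bayer

/-- Bayer-type theorem: if `L ⊆ M_{n,ℓ,t}` is a t-spread lex set and
`N ⊆ M_{n,ℓ,t}` is a t-spread strongly stable set with `|L| ≤ |N|`, then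
`m_{≤ i}(L) ≤ m_{≤ i}(N)` for `i = 1,…,n`. -/
theorem stmt6 (n d ℓ : ℕ) (t : ℕ → ℕ) (hd : 2 ≤ d) (hℓ : ℓ ≤ d)
    (L N : Set (Multiset ℕ)) (hLM : L ⊆ Mset n d ℓ t) (hNM : N ⊆ Mset n d ℓ t)
    (hlex : LexSet n d ℓ t L) (hss : StronglyStableSet n d t N)
    (hcard : L.ncard ≤ N.ncard) :
    ∀ i, 1 ≤ i → i ≤ n → mLe i L ≤ mLe i N := by
  intro i _ _
  have hfinM := Bayer.mset_finite n d ℓ t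
  have hLfin : L.Finite := hfinM.subset hLM
  have hNfin : N.Finite := hfinM.subset hNM
  have hLOk : ∀ u ∈ hLfin.toFinset, Bayer.Ok d t n ℓ u := fun u hu =>
    hLM (hLfin.mem_toFinset.mp hu)
  have hNOk : ∀ u ∈ hNfin.toFinset, Bayer.Ok d t n ℓ u := fun u hu =>
    hNM (hNfin.mem_toFinset.mp hu)
  have hlexF : Bayer.IsLex d t n ℓ hLfin.toFinset := by
    intro u hu v hOk hge
    exact hLfin.mem_toFinset.mpr (hlex u (hLfin.mem_toFinset.mp hu) v hOk hge)
  have hssF : Bayer.IsSS d t n hNfin.toFinset := by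
    intro u hu i' hi' j hj1 hji hts
    exact hNfin.mem_toFinset.mpr (hss u (hNfin.mem_toFinset.mp hu) i' hi' j hj1 hji hts)
  have hcardF : hLfin.toFinset.card ≤ hNfin.toFinset.card := by
    rwa [← Set.ncard_eq_toFinset_card L hLfin, ← Set.ncard_eq_toFinset_card N hNfin]
  have hres := Bayer.core d t ℓ n hLfin.toFinset hNfin.toFinset hℓ hLOk hNOk hlexF hssF
    hcardF i
  have hL' : {u ∈ L | maxVar u ≤ i}
      = ↑(hLfin.toFinset.filter (fun u => maxVar u ≤ i)) := by
    ext u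
    simp only [Set.mem_setOf_eq, Finset.coe_filter, Set.Finite.mem_toFinset]
  have hN' : {u ∈ N | maxVar u ≤ i}
      = ↑(hNfin.toFinset.filter (fun u => maxVar u ≤ i)) := by
    ext u
    simp only [Set.mem_setOf_eq, Finset.coe_filter, Set.Finite.mem_toFinset]
  rw [mLe, mLe, hL', hN', Set.ncard_coe_finset, Set.ncard_coe_finset]
  exact hres
end
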